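/- Fix s ∈ (1/2, 1) and a cutoff η as in the definition of I_N. There is a constant C > 0 (depending only on s, η) such that for every N ≥ 1 and every Schwartz function g : ℝ³ → ℂ, ‖g‖²_{H^s(ℝ³)} ≤ C ( E(I_N g) + ‖g‖²_{L²(ℝ³)} ). -/

import Mathlib

open MeasureTheory Real Complex Filter
open scoped FourierTransform ContDiff ENNReal

noncomputable section

abbrev E3 := EuclideanSpace ℝ (Fin 3)

/-- the `i`-th standard basis vector of `ℝ³`. -/
def e3 (i : Fin 3) : E3 := EuclideanSpace.single i (1 : ℝ)

/-- the `i`-th spatial partial derivative. -/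
def pd (g : E3 → ℂ) (i : Fin 3) (x : E3) : ℂ := fderiv ℝ g x (e3 i)

/-- the (spatial) Laplacian. -/
def lap (g : E3 → ℂ) (x : E3) : ℂ := ∑ i : Fin 3, fderiv ℝ (fun y => pd g i y) x (e3 i)

/-- the antiderivative `F(z) = ∫₀^z f(s) ds` of `f`. -/
def Fa (f : ℝ → ℝ) (z : ℝ) : ℝ := ∫ s in (0:ℝ)..z, f s

/-- `u` is a smooth decaying solution of the gNLS `i ∂ₜ u + α Δ u = μ f(|u|²) u`
on `[0,T] × ℝ³`: it is jointly smooth, every time derivative slice is a Schwartz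
function of `x`, and the equation holds pointwise on `[0,T] × ℝ³`. -/
structure IsSolution (α μ : ℝ) (f : ℝ → ℝ) (T : ℝ) (u : ℝ → E3 → ℂ) : Prop where
  smooth : ContDiff ℝ ∞ (fun p : ℝ × E3 => u p.1 p.2)
  schwartz : ∀ (k : ℕ) (t : ℝ), ∃ g : SchwartzMap E3 ℂ,
      ∀ x, iteratedDeriv k (fun s => u s x) t = g x
  eqn : ∀ t ∈ Set.Icc (0:ℝ) T, ∀ x : E3,
      Complex.I * deriv (fun s => u s x) t + (α : ℂ) * lap (u t) x
        = ((μ * f (Complex.normSq (u t x)) : ℝ) : ℂ) * u t x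

/-- the `i`-th component of the mass current `Im (conj u ∇u)`. -/
def massCur (g : E3 → ℂ) (i : Fin 3) (x : E3) : ℝ := ((starRingEnd ℂ) (g x) * pd g i x).im

/-- the Morawetz action centered at `y`. -/
def morAction (g : E3 → ℂ) (y : E3) : ℝ :=
  ∫ x : E3, ∑ i : Fin 3, massCur g i x * ((x i - y i) / ‖x - y‖)

/-- `|∇̸_y g(x)|²`, the squared norm of the angular part of the gradient. -/
def angGradSq (g : E3 → ℂ) (y x : E3) : ℝ :=
  ∑ i : Fin 3, Complex.normSq (pd g i x -
    (((x i - y i) / ‖x - y‖ : ℝ) : ℂ) *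
      ∑ j : Fin 3, (((x j - y j) / ‖x - y‖ : ℝ) : ℂ) * pd g j x)

/-- squared homogeneous Sobolev norm `‖g‖²_{Ḣ^σ}`. -/
def sobSq (σ : ℝ) (g : E3 → ℂ) : ℝ := ∫ ξ : E3, ‖ξ‖ ^ (2 * σ) * ‖𝓕 g ξ‖ ^ 2


/-- `η` is an admissible cutoff for the smoothing operator `I_N` at regularity `s`:
a smooth nonincreasing function on `[0,∞)` with values in `(0,1]`, equal to `1` for
`r ≤ 1` and to `r^{s−1}` for `r ≥ 2`. -/
def IsCutoff (s : ℝ) (η : ℝ → ℝ) : Prop :=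
  ContDiff ℝ ∞ η ∧ AntitoneOn η (Set.Ici 0) ∧ (∀ r ≥ (0:ℝ), 0 < η r ∧ η r ≤ 1) ∧
    (∀ r ≤ (1:ℝ), η r = 1) ∧ (∀ r ≥ (2:ℝ), η r = r ^ (s - 1))

/-- the smoothing operator `I_N`, a Fourier multiplier with symbol `η(|ξ|/N)`. -/
def Iop (η : ℝ → ℝ) (N : ℝ) (g : E3 → ℂ) : E3 → ℂ :=
  fun x => 𝓕⁻ (fun ξ : E3 => (η (‖ξ‖ / N) : ℂ) * 𝓕 g ξ) x

/-- the Littlewood–Paley type projection `P_M`, a Fourier multiplier with symbol `ψ(ξ/M)`. -/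
def PM (ψ : E3 → ℝ) (M : ℝ) (g : E3 → ℂ) : E3 → ℂ :=
  fun x => 𝓕⁻ (fun ξ : E3 => (ψ (M⁻¹ • ξ) : ℂ) * 𝓕 g ξ) x

/-- pointwise norm `|∇g(x)|` of the spatial gradient. -/
def gradNorm (g : E3 → ℂ) (x : E3) : ℝ := Real.sqrt (∑ i : Fin 3, Complex.normSq (pd g i x))

/-- `(q,r)` is a Schrödinger admissible pair for `ℝ^{3+1}`: `q, r ≥ 2` and
`1/q + 3/(2r) = 3/4`. -/
def SAdmissible (q r : ℝ≥0∞) : Prop := 2 ≤ q ∧ 2 ≤ r ∧ 1 / q + 3 / (2 * r) = 3 / 4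

/-- the mixed spacetime norm `‖G‖_{L^q_t L^r_x([0,T] × ℝ³)}` (of a scalar function). -/
def LqLr (q r : ℝ≥0∞) (T : ℝ) (G : ℝ → E3 → ℝ) : ℝ≥0∞ :=
  eLpNorm (fun t => (eLpNorm (G t) r volume).toReal) q (volume.restrict (Set.Icc (0:ℝ) T))

/-- `Z = sup_{(q,r) admissible} ‖∇ I_N φ‖_{L^q_t L^r_x([0,T] × ℝ³)}`. -/
def Znorm (η : ℝ → ℝ) (N T : ℝ) (φ : ℝ → E3 → ℂ) : ℝ≥0∞ :=
  ⨆ (q : ℝ≥0∞) (r : ℝ≥0∞) (_ : SAdmissible q r),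
    LqLr q r T (fun t x => gradNorm (Iop η N (φ t)) x)

/-- the modified energy `E(w) = ∫ (1/2)|∇w|² + (1/4)|w|⁴ dx`. -/
def energyE (w : E3 → ℂ) : ℝ :=
  ∫ x : E3, (1/2) * (∑ i : Fin 3, Complex.normSq (pd w i x)) + (1/4) * ‖w x‖ ^ 4

/-- squared inhomogeneous Sobolev norm `‖g‖²_{H^s}`. -/
def inhomSobSq (s : ℝ) (g : E3 → ℂ) : ℝ :=
  ∫ ξ : E3, (1 + ‖ξ‖ ^ 2) ^ s * ‖𝓕 g ξ‖ ^ 2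


lemma my_fourier_conj (f : E3 → ℂ) (x : E3) :
    𝓕 (fun ξ => (starRingEnd ℂ) (f ξ)) x = (starRingEnd ℂ) (𝓕⁻ f x) := by
  rw [Real.fourier_eq', Real.fourierInv_eq', ← integral_conj]
  congr 1
  funext v
  rw [smul_eq_mul, smul_eq_mul, map_mul, ← Complex.exp_conj, map_mul, Complex.conj_I,
    Complex.conj_ofReal]
  congr 2
  push_cast
  ring

lemma my_flip : (innerₗ E3).flip = innerₗ E3 := by
  apply LinearMap.ext; intro x; apply LinearMap.ext; intro y
  exact real_inner_comm x y

lemma my_parseval (f : SchwartzMap E3 ℂ) :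
    ∫ ξ : E3, ‖𝓕 (⇑f) ξ‖ ^ 2 = ∫ x : E3, ‖f x‖ ^ 2 := by
  have hFi : Integrable (fun ξ => 𝓕 (⇑f) ξ) := by
    exact (FourierTransform.fourierCLE ℝ (SchwartzMap E3 ℂ) f).integrable (μ := volume)
  have hg : Integrable (fun ξ : E3 => (starRingEnd ℂ) (𝓕 (⇑f) ξ)) := by
    exact (Complex.conjLIE.toContinuousLinearEquiv.toContinuousLinearMap).integrable_comp hFi
  have key := VectorFourier.integral_fourierIntegral_smul_eq_flip
    (e := Real.fourierChar) (L := innerₗ E3) (μ := (volume : Measure E3))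
    (ν := (volume : Measure E3)) Real.continuous_fourierChar continuous_inner
    f.integrable hg
  rw [my_flip] at key
  have key2 : ∫ ξ : E3, (𝓕 (⇑f) ξ) * (starRingEnd ℂ) (𝓕 (⇑f) ξ)
      = ∫ x : E3, f x * (starRingEnd ℂ) (f x) := by
    calc ∫ ξ : E3, (𝓕 (⇑f) ξ) * (starRingEnd ℂ) (𝓕 (⇑f) ξ)
        = ∫ ξ : E3, (VectorFourier.fourierIntegral Real.fourierChar volume (innerₗ E3) (⇑f) ξ)
            • (starRingEnd ℂ) (𝓕 (⇑f) ξ) := rfl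
      _ = ∫ x : E3, f x • (VectorFourier.fourierIntegral Real.fourierChar volume (innerₗ E3)
            (fun ξ => (starRingEnd ℂ) (𝓕 (⇑f) ξ)) x) := key
      _ = ∫ x : E3, f x * (starRingEnd ℂ) (f x) := by
          congr 1; funext x
          have : (VectorFourier.fourierIntegral Real.fourierChar volume (innerₗ E3)
              (fun ξ => (starRingEnd ℂ) (𝓕 (⇑f) ξ)) x)
              = 𝓕 (fun ξ => (starRingEnd ℂ) (𝓕 (⇑f) ξ)) x := rfl
          rw [smul_eq_mul, this, my_fourier_conj]
          congr 2
          exact congrFun (f.continuous.fourierInv_fourier_eq f.integrable hFi) x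
  have e1 : ∀ z : ℂ, z * (starRingEnd ℂ) z = ((‖z‖ ^ 2 : ℝ) : ℂ) := fun z => by
    rw [Complex.mul_conj]; norm_cast; rw [← Complex.sq_norm]
  simp_rw [e1] at key2
  have cast1 : ∀ (h : E3 → ℝ), ∫ ξ : E3, ((h ξ : ℝ) : ℂ) = ((∫ ξ : E3, h ξ : ℝ) : ℂ) :=
    fun h => integral_ofReal
  rw [cast1, cast1] at key2
  exact_mod_cast key2

lemma my_pd_eq (f : SchwartzMap E3 ℂ) (i : Fin 3) :
    pd (⇑f) i = ⇑(LineDeriv.lineDerivOpCLM ℝ (SchwartzMap E3 ℂ) (e3 i) f) := by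
  funext x
  rw [LineDeriv.lineDerivOpCLM_apply]
  rfl

lemma my_fourier_pd (f : SchwartzMap E3 ℂ) (i : Fin 3) (ξ : E3) :
    𝓕 (pd (⇑f) i) ξ = (2 * (π : ℂ) * Complex.I * (ξ i)) * 𝓕 (⇑f) ξ := by
  have hd : Integrable (fderiv ℝ (⇑f)) := by
    have := (SchwartzMap.fderivCLM ℝ E3 ℂ f).integrable (μ := volume)
    exact this
  have h1 : 𝓕 (pd (⇑f) i) ξ = (𝓕 (fderiv ℝ (⇑f)) ξ) (e3 i) := by
    rw [Real.fourier_continuousLinearMap_apply hd]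
    rfl
  rw [h1, Real.fourier_fderiv f.integrable f.differentiable hd,
    VectorFourier.fourierSMulRight_apply]
  have h2 : ((-innerSL ℝ) ξ) (e3 i) = -(ξ i) := by
    simp only [ContinuousLinearMap.neg_apply, innerSL_apply_apply]
    rw [e3, EuclideanSpace.inner_single_right]
    simp
  rw [h2]
  simp only [neg_smul, smul_neg, neg_neg]
  rw [Complex.real_smul, smul_eq_mul]
  push_cast
  ring

lemma my_norm_fourier_pd (f : SchwartzMap E3 ℂ) (i : Fin 3) (ξ : E3) :
    ‖𝓕 (pd (⇑f) i) ξ‖ ^ 2 = 4 * π ^ 2 * (ξ i) ^ 2 * ‖𝓕 (⇑f) ξ‖ ^ 2 := by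
  rw [my_fourier_pd, norm_mul]
  have : ‖2 * (π : ℂ) * Complex.I * (ξ i)‖ = 2 * π * |ξ i| := by
    simp [_root_.abs_of_nonneg pi_nonneg]
  rw [this]
  rw [mul_pow, mul_pow, mul_pow, _root_.sq_abs]
  ring

section Cutoff

variable {s : ℝ} {η : ℝ → ℝ} {N : ℝ}

lemma cutoff_h_eq_one (hη : IsCutoff s η) (hN : 1 ≤ N) {t : ℝ} (ht : t < N ^ 2) :
    η (Real.sqrt t / N) = 1 := by
  apply hη.2.2.2.1
  rw [div_le_one (by linarith)]
  calc Real.sqrt t ≤ Real.sqrt (N ^ 2) := Real.sqrt_le_sqrt ht.le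
    _ = N := by rw [Real.sqrt_sq (by linarith)]

lemma cutoff_h_smooth (hη : IsCutoff s η) (hN : 1 ≤ N) :
    ContDiff ℝ ∞ (fun t : ℝ => η (Real.sqrt t / N)) := by
  rw [contDiff_iff_contDiffAt]
  intro t
  rcases lt_or_ge t (N ^ 2) with ht | ht
  · apply ContDiffAt.congr_of_eventuallyEq (contDiffAt_const (c := (1:ℝ)))
    filter_upwards [Iio_mem_nhds ht] with u hu
    exact cutoff_h_eq_one hη hN hu
  · have ht0 : 0 < t := lt_of_lt_of_le (by nlinarith) ht
    exact (hη.1.contDiffAt).comp t ((contDiffAt_sqrt ht0.ne').div_const N)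

/-- on `(4N², ∞)` the iterated derivatives of `h` are explicit powers. -/
lemma cutoff_h_formula (hη : IsCutoff s η) (hN : 1 ≤ N) (n : ℕ) :
    ∃ c : ℝ, ∀ t ∈ Set.Ioi (4 * N ^ 2), iteratedDeriv n (fun t : ℝ => η (Real.sqrt t / N)) t
      = c * t ^ ((s - 1) / 2 - n) := by
  have hN0 : (0:ℝ) < N := by linarith
  induction n with
  | zero =>
    refine ⟨(N ^ (s - 1))⁻¹, fun t ht => ?_⟩
    have ht0 : (0:ℝ) < t := by simp only [Set.mem_Ioi] at ht; nlinarith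
    have hst : 2 * N ≤ Real.sqrt t := by
      have : Real.sqrt (4 * N ^ 2) ≤ Real.sqrt t := Real.sqrt_le_sqrt (le_of_lt ht)
      calc 2 * N = Real.sqrt ((2 * N) ^ 2) := (Real.sqrt_sq (by linarith)).symm
        _ = Real.sqrt (4 * N ^ 2) := by ring_nf
        _ ≤ Real.sqrt t := this
    have h2 : (2:ℝ) ≤ Real.sqrt t / N := by
      rw [le_div_iff₀ hN0]; linarith
    simp only [iteratedDeriv_zero]
    rw [hη.2.2.2.2 _ h2, Real.div_rpow (Real.sqrt_nonneg t) hN0.le, Real.sqrt_eq_rpow,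
      ← Real.rpow_mul ht0.le, div_eq_mul_inv, mul_comm]
    congr 1
    push_cast
    ring
  | succ n ih =>
    obtain ⟨c, hc⟩ := ih
    refine ⟨c * ((s - 1) / 2 - n), fun t ht => ?_⟩
    have ht0 : (0:ℝ) < t := by simp only [Set.mem_Ioi] at ht; nlinarith
    rw [iteratedDeriv_succ]
    have hev : iteratedDeriv n (fun t : ℝ => η (Real.sqrt t / N))
        =ᶠ[nhds t] fun u => c * u ^ ((s - 1) / 2 - n) := by
      filter_upwards [isOpen_Ioi.mem_nhds ht] with u hu
      exact hc u hu
    rw [hev.deriv_eq]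
    have hdiff : DifferentiableAt ℝ (fun u : ℝ => u ^ ((s - 1) / 2 - n)) t :=
      (Real.hasDerivAt_rpow_const (Or.inl ht0.ne')).differentiableAt
    rw [deriv_const_mul _ hdiff, (Real.hasDerivAt_rpow_const (Or.inl ht0.ne')).deriv]
    rw [show (s - 1) / 2 - (n + 1 : ℕ) = (s - 1) / 2 - n - 1 by push_cast; ring]
    ring

lemma cutoff_h_bound (hη : IsCutoff s η) (hs1 : s < 1) (hN : 1 ≤ N) (n : ℕ) :
    ∃ C : ℝ, ∀ t : ℝ, ‖iteratedDeriv n (fun t : ℝ => η (Real.sqrt t / N)) t‖ ≤ C := by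
  have hN0 : (0:ℝ) < N := by linarith
  rcases Nat.eq_zero_or_pos n with rfl | hn
  · refine ⟨1, fun t => ?_⟩
    simp only [iteratedDeriv_zero, Real.norm_eq_abs]
    have h0 : 0 ≤ Real.sqrt t / N := div_nonneg (Real.sqrt_nonneg t) hN0.le
    have := hη.2.2.1 _ h0
    rw [abs_of_pos this.1]
    exact this.2
  · obtain ⟨c, hc⟩ := cutoff_h_formula hη hN n
    have hcont : Continuous (iteratedDeriv n (fun t : ℝ => η (Real.sqrt t / N))) :=
      (cutoff_h_smooth hη hN).continuous_iteratedDeriv n (by exact_mod_cast le_top)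
    obtain ⟨C₁, hC₁⟩ := (isCompact_Icc (a := (0:ℝ)) (b := 4 * N ^ 2 + 1)).exists_bound_of_continuousOn
      hcont.continuousOn
    refine ⟨max C₁ |c|, fun t => ?_⟩
    rcases lt_or_ge t (N ^ 2) with ht | ht
    · have hz : iteratedDeriv n (fun t : ℝ => η (Real.sqrt t / N)) t = 0 := by
        have hev : (fun t : ℝ => η (Real.sqrt t / N)) =ᶠ[nhds t] fun _ => (1:ℝ) := by
          filter_upwards [Iio_mem_nhds ht] with u hu
          exact cutoff_h_eq_one hη hN hu
        rw [hev.iteratedDeriv_eq n, iteratedDeriv_eq_iteratedFDeriv,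
          iteratedFDeriv_const_of_ne hn.ne' (1:ℝ)]
        simp
      rw [hz]
      simp only [norm_zero]
      exact le_trans (abs_nonneg c) (le_max_right _ _)
    · rcases le_or_gt t (4 * N ^ 2 + 1) with ht2 | ht2
      · refine le_trans (hC₁ t ⟨by nlinarith, ht2⟩) (le_max_left _ _)
      · have htIoi : t ∈ Set.Ioi (4 * N ^ 2) := by simp only [Set.mem_Ioi]; linarith
        rw [hc t htIoi]
        have ht1 : (1:ℝ) ≤ t := by nlinarith
        have hexp : (s - 1) / 2 - n ≤ 0 := by
          have hnn : (0:ℝ) ≤ (n:ℝ) := Nat.cast_nonneg n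
          linarith
        have : t ^ ((s - 1) / 2 - n) ≤ 1 := Real.rpow_le_one_of_one_le_of_nonpos ht1 hexp
        rw [Real.norm_eq_abs, abs_mul]
        calc |c| * |t ^ ((s - 1) / 2 - n)| ≤ |c| * 1 := by
              apply mul_le_mul_of_nonneg_left _ (abs_nonneg c)
              rw [_root_.abs_of_nonneg (Real.rpow_nonneg (by linarith) _)]
              exact this
          _ ≤ max C₁ |c| := by rw [mul_one]; exact le_max_right _ _
    
end Cutoff

section Temperate

variable {s : ℝ} {η : ℝ → ℝ} {N : ℝ}

lemma id_deriv_bound (x : E3) (j : ℕ) : ‖iteratedFDeriv ℝ j (fun y : E3 => y) x‖ ≤ 1 + ‖x‖ := by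
  have hder : (fderiv ℝ (fun y : E3 => y)) = fun _ : E3 => ContinuousLinearMap.id ℝ E3 :=
    funext fun y => fderiv_id'
  match j with
  | 0 => rw [norm_iteratedFDeriv_zero]; linarith [norm_nonneg x]
  | 1 =>
    rw [show (1:ℕ) = 0 + 1 from rfl, ← norm_iteratedFDeriv_fderiv, norm_iteratedFDeriv_zero, hder]
    linarith [ContinuousLinearMap.norm_id_le (𝕜 := ℝ) (E := E3), norm_nonneg x]
  | (k+2) =>
    rw [show k + 2 = (k+1) + 1 from rfl, ← norm_iteratedFDeriv_fderiv, hder,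
      iteratedFDeriv_const_of_ne (Nat.succ_ne_zero k)]
    simp only [Pi.zero_apply, norm_zero]
    linarith [norm_nonneg x]

lemma q_deriv_bound (x : E3) (i : ℕ) :
    ‖iteratedFDeriv ℝ i (fun y : E3 => ‖y‖ ^ 2) x‖ ≤ 2 ^ i * (1 + ‖x‖) ^ 2 := by
  have hq : (fun y : E3 => ‖y‖ ^ 2) = fun y : E3 => (innerSL ℝ) y ((fun z : E3 => z) y) := by
    funext y
    simp only [innerSL_apply_apply]
    exact (real_inner_self_eq_norm_sq y).symm
  rw [hq]
  have hbil := (innerSL ℝ (E := E3)).norm_iteratedFDeriv_le_of_bilinear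
    (f := fun z : E3 => z) (g := fun z : E3 => z) contDiff_id contDiff_id x
    (le_top (a := (i : WithTop ℕ∞)))
  refine le_trans hbil ?_
  have hx0 : (0:ℝ) ≤ 1 + ‖x‖ := by linarith [norm_nonneg x]
  have hsum1 : ∑ j ∈ Finset.range (i + 1),
      (i.choose j : ℝ) * ‖iteratedFDeriv ℝ j (fun z : E3 => z) x‖ *
        ‖iteratedFDeriv ℝ (i - j) (fun z : E3 => z) x‖
      ≤ ∑ j ∈ Finset.range (i + 1), (i.choose j : ℝ) * ((1 + ‖x‖) * (1 + ‖x‖)) := by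
    apply Finset.sum_le_sum
    intro j _
    have h1 := id_deriv_bound x j
    have h2 := id_deriv_bound x (i - j)
    have h3 := mul_le_mul h1 h2 (norm_nonneg _) hx0
    rw [mul_assoc]
    exact mul_le_mul_of_nonneg_left h3 (Nat.cast_nonneg _)
  have hS1 : (0:ℝ) ≤ ∑ j ∈ Finset.range (i + 1),
      (i.choose j : ℝ) * ‖iteratedFDeriv ℝ j (fun z : E3 => z) x‖ *
        ‖iteratedFDeriv ℝ (i - j) (fun z : E3 => z) x‖ :=
    Finset.sum_nonneg fun j _ => by positivity
  have h4 := mul_le_mul (norm_innerSL_le ℝ (E := E3)) hsum1 hS1 zero_le_one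
  refine le_trans h4 ?_
  rw [one_mul, ← Finset.sum_mul]
  have hsum : (∑ j ∈ Finset.range (i + 1), (i.choose j : ℝ)) = 2 ^ i := by
    exact_mod_cast congrArg (Nat.cast (R := ℝ)) (Nat.sum_range_choose i)
  rw [hsum]
  ring_nf
  nlinarith [sq_nonneg (1 + ‖x‖)]

lemma mult_temperate (hη : IsCutoff s η) (hs1 : s < 1) (hN : 1 ≤ N) :
    Function.HasTemperateGrowth (fun ξ : E3 => η (‖ξ‖ / N)) := by
  have hqm : (fun ξ : E3 => η (‖ξ‖ / N))
      = (fun t : ℝ => η (Real.sqrt t / N)) ∘ (fun y : E3 => ‖y‖ ^ 2) := by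
    funext y
    simp only [Function.comp_apply]
    rw [Real.sqrt_sq (norm_nonneg y)]
  constructor
  · rw [hqm]; exact (cutoff_h_smooth hη hN).comp (contDiff_norm_sq ℝ)
  · intro n
    set F : ℕ → ℝ := fun i => (cutoff_h_bound hη hs1 hN i).choose with hF
    have hFspec : ∀ i t, ‖iteratedDeriv i (fun t : ℝ => η (Real.sqrt t / N)) t‖ ≤ F i :=
      fun i => (cutoff_h_bound hη hs1 hN i).choose_spec
    set C : ℝ := ∑ i ∈ Finset.range (n + 1), max (F i) 0 with hC
    have hCb : ∀ i ≤ n, ∀ t, ‖iteratedDeriv i (fun t : ℝ => η (Real.sqrt t / N)) t‖ ≤ C := by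
      intro i hi t
      calc ‖iteratedDeriv i (fun t : ℝ => η (Real.sqrt t / N)) t‖ ≤ F i := hFspec i t
        _ ≤ max (F i) 0 := le_max_left _ _
        _ ≤ C := Finset.single_le_sum (f := fun i => max (F i) 0)
            (fun j _ => le_max_right _ _) (Finset.mem_range.mpr (Nat.lt_succ_of_le hi))
    refine ⟨2 * n, (n.factorial : ℝ) * C * 2 ^ (n * n), fun x => ?_⟩
    rw [hqm]
    set D : ℝ := 2 ^ n * (1 + ‖x‖) ^ 2 with hD
    have hD1 : (1:ℝ) ≤ D := by
      have h1 : (1:ℝ) ≤ 2 ^ n := one_le_pow₀ one_le_two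
      have h2 : (1:ℝ) ≤ (1 + ‖x‖) ^ 2 := by nlinarith [norm_nonneg x]
      calc (1:ℝ) = 1 * 1 := by ring
        _ ≤ 2 ^ n * (1 + ‖x‖) ^ 2 := by exact mul_le_mul h1 h2 zero_le_one (by positivity)
    have key := norm_iteratedFDeriv_comp_le (g := fun t : ℝ => η (Real.sqrt t / N))
      (f := fun y : E3 => ‖y‖ ^ 2) (N := ∞) (n := n) (cutoff_h_smooth hη hN)
      (contDiff_norm_sq ℝ)
      (by exact_mod_cast (le_top : (n : ℕ∞) ≤ ⊤)) x (C := C) (D := D) ?_ ?_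
    · calc ‖iteratedFDeriv ℝ n ((fun t : ℝ => η (Real.sqrt t / N)) ∘ fun y : E3 => ‖y‖ ^ 2) x‖
          ≤ (n.factorial : ℝ) * C * D ^ n := key
        _ = (n.factorial : ℝ) * C * 2 ^ (n * n) * (1 + ‖x‖) ^ (2 * n) := by
          rw [hD, mul_pow, ← pow_mul, ← pow_mul]
          ring
    · intro i hi
      rw [norm_iteratedFDeriv_eq_norm_iteratedDeriv]
      exact hCb i hi _
    · intro i hi1 hin
      calc ‖iteratedFDeriv ℝ i (fun y : E3 => ‖y‖ ^ 2) x‖ ≤ 2 ^ i * (1 + ‖x‖) ^ 2 :=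
          q_deriv_bound x i
        _ ≤ 2 ^ n * (1 + ‖x‖) ^ 2 := by
          have : (2:ℝ) ^ i ≤ 2 ^ n := pow_le_pow_right₀ one_le_two hin
          nlinarith [norm_nonneg x, sq_nonneg (1 + ‖x‖)]
        _ = D := hD.symm
        _ ≤ D ^ i := le_self_pow₀ hD1 (by omega)

end Temperate

section Pointwise

variable {s : ℝ} {η : ℝ → ℝ} {N : ℝ}

lemma eta_claim (hs : 1/2 < s) (hs1 : s < 1) (hη : IsCutoff s η) (hN : 1 ≤ N)
    {t : ℝ} (ht : 1 < t) : t ^ (s - 1) ≤ 2 * η (t / N) := by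
  have hN0 : (0:ℝ) < N := by linarith
  have ht0 : (0:ℝ) < t := by linarith
  have hts : t ^ (s - 1) ≤ 1 := Real.rpow_le_one_of_one_le_of_nonpos ht.le (by linarith)
  rcases le_or_gt t N with htN | htN
  · have h1 : η (t / N) = 1 := hη.2.2.2.1 _ ((div_le_one hN0).mpr htN)
    rw [h1]; linarith
  · rcases le_or_gt t (2 * N) with ht2N | ht2N
    · have harg : t / N ≤ 2 := by rw [div_le_iff₀ hN0]; linarith
      have harg0 : (0:ℝ) ≤ t / N := by positivity
      have hmono : η 2 ≤ η (t / N) :=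
        hη.2.1 (Set.mem_Ici.mpr harg0) (Set.mem_Ici.mpr (by norm_num)) harg
      have h2 : η 2 = (2:ℝ) ^ (s - 1) := hη.2.2.2.2 2 le_rfl
      have h3 : (2:ℝ) ^ (-1:ℝ) ≤ (2:ℝ) ^ (s - 1) :=
        Real.rpow_le_rpow_of_exponent_le one_le_two (by linarith)
      have h4 : (2:ℝ) ^ (-1:ℝ) = 1/2 := by
        rw [Real.rpow_neg_one]; norm_num
      have : (1:ℝ) ≤ 2 * η (t / N) := by
        rw [h2] at hmono
        rw [h4] at h3
        linarith
      linarith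
    · have harg : (2:ℝ) ≤ t / N := by rw [le_div_iff₀ hN0]; linarith
      have heq : η (t / N) = (t / N) ^ (s - 1) := hη.2.2.2.2 _ harg
      have hbase : t / N ≤ t := by
        rw [div_le_iff₀ hN0]; nlinarith
      have h5 : t ^ (s - 1) ≤ (t / N) ^ (s - 1) := by
        apply Real.rpow_le_rpow_of_nonpos (by positivity) hbase (by linarith)
      rw [heq]
      have h6 : (0:ℝ) ≤ (t / N) ^ (s - 1) := Real.rpow_nonneg (by positivity) _
      linarith

lemma pointwise_key (hs : 1/2 < s) (hs1 : s < 1) (hη : IsCutoff s η) (hN : 1 ≤ N)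
    {t : ℝ} (ht : 0 ≤ t) :
    (1 + t ^ 2) ^ s ≤ 2 + 8 * (η (t / N)) ^ 2 * t ^ 2 := by
  have hs0 : (0:ℝ) < s := by linarith
  have hη0 : 0 ≤ η (t / N) := by
    have : (0:ℝ) ≤ t / N := by positivity
    exact (hη.2.2.1 _ this).1.le
  rcases le_or_gt t 1 with h1 | h1
  · have e1 : (1 + t ^ 2) ^ s ≤ (2:ℝ) ^ s :=
      Real.rpow_le_rpow (by positivity) (by nlinarith) hs0.le
    have e2 : (2:ℝ) ^ s ≤ (2:ℝ) ^ (1:ℝ) :=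
      Real.rpow_le_rpow_of_exponent_le one_le_two hs1.le
    rw [Real.rpow_one] at e2
    have e3 : (0:ℝ) ≤ 8 * (η (t / N)) ^ 2 * t ^ 2 := by positivity
    linarith
  · have ht0 : (0:ℝ) < t := by linarith
    have e1 : (1 + t ^ 2) ^ s ≤ (2 * t ^ 2) ^ s :=
      Real.rpow_le_rpow (by positivity) (by nlinarith) hs0.le
    have e2 : (2 * t ^ 2 : ℝ) ^ s = (2:ℝ) ^ s * (t ^ 2 : ℝ) ^ s :=
      Real.mul_rpow (by norm_num) (by positivity)
    have e3 : (2:ℝ) ^ s ≤ 2 := by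
      have := Real.rpow_le_rpow_of_exponent_le (one_le_two (α := ℝ)) hs1.le
      rwa [Real.rpow_one] at this
    have e4 : (t ^ 2 : ℝ) ^ s = (t ^ (s - 1)) ^ 2 * t ^ 2 := by
      rw [← Real.rpow_natCast t 2, ← Real.rpow_mul ht0.le,
        ← Real.rpow_natCast (t ^ (s - 1)) 2, ← Real.rpow_mul ht0.le,
        ← Real.rpow_add ht0]
      congr 1
      push_cast
      ring
    have e5 : (t ^ (s - 1)) ^ 2 ≤ (2 * η (t / N)) ^ 2 := by
      apply pow_le_pow_left₀ (Real.rpow_nonneg ht0.le _) (eta_claim hs hs1 hη hN h1) 2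
    have e6 : (t ^ 2 : ℝ) ^ s ≤ 4 * (η (t / N)) ^ 2 * t ^ 2 := by
      rw [e4]
      have : (2 * η (t / N)) ^ 2 = 4 * (η (t / N)) ^ 2 := by ring
      nlinarith [sq_nonneg t]
    have e7 : (0:ℝ) ≤ (t ^ 2 : ℝ) ^ s := Real.rpow_nonneg (by positivity) _
    calc (1 + t ^ 2) ^ s ≤ (2:ℝ) ^ s * (t ^ 2 : ℝ) ^ s := by rw [← e2]; exact e1
      _ ≤ 2 * (4 * (η (t / N)) ^ 2 * t ^ 2) := by
          apply mul_le_mul e3 e6 e7 (by norm_num)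
      _ ≤ 2 + 8 * (η (t / N)) ^ 2 * t ^ 2 := by nlinarith

end Pointwise

section IntHelpers

lemma schwartz_bound (f : SchwartzMap E3 ℂ) : ∃ C : ℝ, 0 ≤ C ∧ ∀ x, ‖f x‖ ≤ C :=
  ⟨(SchwartzMap.seminorm ℝ 0 0) f, apply_nonneg _ _, fun x => f.norm_le_seminorm ℝ x⟩

lemma integrable_norm_sq (f : SchwartzMap E3 ℂ) :
    Integrable (fun x : E3 => ‖f x‖ ^ 2) := by
  obtain ⟨C, _, hC⟩ := schwartz_bound f
  have h := Integrable.bdd_mul ((f.integrable (μ := volume)).norm)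
    (f.continuous.norm.aestronglyMeasurable)
    (Filter.Eventually.of_forall fun x => by rw [Real.norm_eq_abs, _root_.abs_of_nonneg (norm_nonneg _)]; exact hC x)
  apply h.congr
  filter_upwards with x
  ring

lemma integrable_w2_norm_sq (f : SchwartzMap E3 ℂ) :
    Integrable (fun ξ : E3 => ‖ξ‖ ^ 2 * ‖f ξ‖ ^ 2) := by
  obtain ⟨C, _, hC⟩ := schwartz_bound f
  have h := Integrable.bdd_mul (f.integrable_pow_mul volume 2)
    (f.continuous.norm.aestronglyMeasurable)
    (Filter.Eventually.of_forall fun x => by rw [Real.norm_eq_abs, _root_.abs_of_nonneg (norm_nonneg _)]; exact hC x)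
  apply h.congr
  filter_upwards with x
  ring

lemma integrable_norm_four (f : SchwartzMap E3 ℂ) :
    Integrable (fun x : E3 => ‖f x‖ ^ 4) := by
  obtain ⟨C, hC0, hC⟩ := schwartz_bound f
  have h := Integrable.bdd_mul ((f.integrable (μ := volume)).norm)
    ((f.continuous.norm.pow 3).aestronglyMeasurable)
    (Filter.Eventually.of_forall fun x => by
      rw [Real.norm_eq_abs, _root_.abs_of_nonneg (by positivity)]
      exact pow_le_pow_left₀ (norm_nonneg _) (hC x) 3 : ∀ᵐ x, ‖‖f x‖ ^ 3‖ ≤ C ^ 3)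
  apply h.congr
  filter_upwards with x
  simp only [Pi.pow_apply]
  ring

end IntHelpers

lemma norm_sq_eq_sum (ξ : E3) : ‖ξ‖ ^ 2 = ∑ i : Fin 3, (ξ i) ^ 2 := by
  rw [EuclideanSpace.norm_eq, Real.sq_sqrt (by positivity)]
  congr 1
  funext i
  rw [Real.norm_eq_abs, _root_.sq_abs]

lemma coord_sq_le (ξ : E3) (i : Fin 3) : (ξ i) ^ 2 ≤ ‖ξ‖ ^ 2 := by
  rw [norm_sq_eq_sum]
  exact Finset.single_le_sum (f := fun j => (ξ j) ^ 2) (fun j _ => sq_nonneg _)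
    (Finset.mem_univ i)

set_option maxHeartbeats 1600000 in
/-- Fix `s ∈ (1/2, 1)` and a cutoff `η` for `I_N`.  There is `C > 0`
(depending only on `s, η`) so that for every `N ≥ 1` and every Schwartz `g : ℝ³ → ℂ`,
`‖g‖²_{H^s} ≤ C ( E(I_N g) + ‖g‖²_{L²} )`. -/
theorem Hs_bound_by_energy_I
    (s : ℝ) (hs : 1/2 < s) (hs1 : s < 1) (η : ℝ → ℝ) (hη : IsCutoff s η) :
    ∃ C > (0:ℝ), ∀ N ≥ (1:ℝ), ∀ g : SchwartzMap E3 ℂ,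
      inhomSobSq s (fun x => g x)
        ≤ C * (energyE (Iop η N (fun x => g x)) + ∫ x : E3, Complex.normSq (g x)) := by
  refine ⟨4, by norm_num, fun N hN g => ?_⟩
  have hmt := mult_temperate hη hs1 hN
  obtain ⟨G, hG⟩ : ∃ G : SchwartzMap E3 ℂ, ⇑G = 𝓕 ⇑g :=
    ⟨FourierTransform.fourierCLE ℝ (SchwartzMap E3 ℂ) g, SchwartzMap.fourier_coe g⟩
  obtain ⟨H, hHfun⟩ : ∃ H : SchwartzMap E3 ℂ,
      ⇑H = fun ξ : E3 => ((η (‖ξ‖ / N) : ℝ) : ℂ) * 𝓕 (⇑g) ξ := by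
    refine ⟨SchwartzMap.bilinLeftCLM
      ((ContinuousLinearMap.lsmul ℝ ℝ : ℝ →L[ℝ] ℂ →L[ℝ] ℂ).flip) hmt
      (FourierTransform.fourierCLE ℝ (SchwartzMap E3 ℂ) g), ?_⟩
    funext ξ
    show ((ContinuousLinearMap.lsmul ℝ ℝ : ℝ →L[ℝ] ℂ →L[ℝ] ℂ).flip)
      ((FourierTransform.fourierCLE ℝ (SchwartzMap E3 ℂ) g) ξ) (η (‖ξ‖ / N)) = _
    simp only [ContinuousLinearMap.flip_apply, ContinuousLinearMap.lsmul_apply]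
    rw [Complex.real_smul]; rfl
  have hH : ∀ ξ : E3, H ξ = ((η (‖ξ‖ / N) : ℝ) : ℂ) * 𝓕 (⇑g) ξ := fun ξ => congrFun hHfun ξ
  have hmpos : ∀ ξ : E3, 0 < η (‖ξ‖ / N) := by
    intro ξ
    have : (0:ℝ) ≤ ‖ξ‖ / N := by positivity
    exact (hη.2.2.1 _ this).1
  have hmle : ∀ ξ : E3, η (‖ξ‖ / N) ≤ 1 := by
    intro ξ
    have : (0:ℝ) ≤ ‖ξ‖ / N := by positivity
    exact (hη.2.2.1 _ this).2
  have hHnorm : ∀ ξ : E3, ‖H ξ‖ ^ 2 = (η (‖ξ‖ / N)) ^ 2 * ‖𝓕 (⇑g) ξ‖ ^ 2 := by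
    intro ξ
    rw [hH ξ, norm_mul, mul_pow, Complex.norm_real, Real.norm_eq_abs, _root_.sq_abs]
  obtain ⟨w, hwH, hwinv⟩ : ∃ w : SchwartzMap E3 ℂ, 𝓕 ⇑w = ⇑H ∧ ⇑w = 𝓕⁻ ⇑H := by
    refine ⟨(FourierTransform.fourierCLE ℝ (SchwartzMap E3 ℂ)).symm H, ?_,
      by rw [FourierTransform.fourierCLE_symm_apply, SchwartzMap.fourierInv_coe]⟩
    have h2 : FourierTransform.fourierCLE ℝ (SchwartzMap E3 ℂ) ((FourierTransform.fourierCLE ℝ (SchwartzMap E3 ℂ)).symm H)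
        = H := (FourierTransform.fourierCLE ℝ (SchwartzMap E3 ℂ)).apply_symm_apply H
    calc 𝓕 ⇑((FourierTransform.fourierCLE ℝ (SchwartzMap E3 ℂ)).symm H)
        = ⇑(FourierTransform.fourierCLE ℝ (SchwartzMap E3 ℂ) ((FourierTransform.fourierCLE ℝ (SchwartzMap E3 ℂ)).symm H)) :=
          rfl
      _ = ⇑H := by rw [h2]
  have hIop : Iop η N (fun x => g x) = ⇑w := by
    rw [hwinv]
    unfold Iop
    have he : (fun ξ : E3 => ((η (‖ξ‖ / N) : ℝ) : ℂ) * 𝓕 (fun x => g x) ξ) = ⇑H := hHfun.symm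
    rw [he]
  -- energy lower bound
  have epd : ∀ i : Fin 3, pd ⇑w i = ⇑(LineDeriv.lineDerivOpCLM ℝ (SchwartzMap E3 ℂ) (e3 i) w) := my_pd_eq w
  have hint1 : ∀ i : Fin 3, Integrable (fun x => Complex.normSq (pd (⇑w) i x)) := by
    intro i
    apply (integrable_norm_sq (LineDeriv.lineDerivOpCLM ℝ (SchwartzMap E3 ℂ) (e3 i) w)).congr
    filter_upwards with x
    simp [Complex.normSq_eq_norm_sq, epd i]
  have hsum_int : Integrable
      (fun x : E3 => (1/2 : ℝ) * ∑ i : Fin 3, Complex.normSq (pd (⇑w) i x)) :=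
    (integrable_finset_sum _ (fun i _ => hint1 i)).const_mul _
  have h4int : Integrable (fun x : E3 => (1/4 : ℝ) * ‖w x‖ ^ 4) :=
    (integrable_norm_four w).const_mul _
  have energy_split : energyE ⇑w
      = (∫ x : E3, (1/2 : ℝ) * ∑ i : Fin 3, Complex.normSq (pd (⇑w) i x))
        + ∫ x : E3, (1/4 : ℝ) * ‖w x‖ ^ 4 := by
    unfold energyE
    exact integral_add hsum_int h4int
  have hE40 : (0:ℝ) ≤ ∫ x : E3, (1/4 : ℝ) * ‖w x‖ ^ 4 :=
    integral_nonneg fun x => by positivity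
  have hE20 : (0:ℝ) ≤ ∫ x : E3, (1/2 : ℝ) * ∑ i : Fin 3, Complex.normSq (pd (⇑w) i x) :=
    integral_nonneg fun x => by
      show (0:ℝ) ≤ _
      exact mul_nonneg (by norm_num)
        (Finset.sum_nonneg fun i _ => Complex.normSq_nonneg _)
  have hE0 : 0 ≤ energyE ⇑w := by rw [energy_split]; linarith
  have hEsum : (∑ i : Fin 3, ∫ x : E3, Complex.normSq (pd (⇑w) i x)) ≤ 2 * energyE ⇑w := by
    have h1 : ∫ x : E3, (1/2 : ℝ) * ∑ i : Fin 3, Complex.normSq (pd (⇑w) i x)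
        = (1/2 : ℝ) * ∑ i : Fin 3, ∫ x : E3, Complex.normSq (pd (⇑w) i x) := by
      rw [integral_const_mul, integral_finset_sum _ (fun i _ => hint1 i)]
    rw [energy_split, h1]
    linarith
  -- frequency identity
  have key_i : ∀ i : Fin 3, ∫ x : E3, Complex.normSq (pd (⇑w) i x)
      = ∫ ξ : E3, 4 * π ^ 2 * (ξ i) ^ 2 * ((η (‖ξ‖ / N)) ^ 2 * ‖𝓕 (⇑g) ξ‖ ^ 2) := by
    intro i
    calc ∫ x : E3, Complex.normSq (pd (⇑w) i x)
        = ∫ x : E3, ‖(LineDeriv.lineDerivOpCLM ℝ (SchwartzMap E3 ℂ) (e3 i) w) x‖ ^ 2 := by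
          congr 1; funext x; simp [Complex.normSq_eq_norm_sq, epd i]
      _ = ∫ ξ : E3, ‖𝓕 (⇑(LineDeriv.lineDerivOpCLM ℝ (SchwartzMap E3 ℂ) (e3 i) w)) ξ‖ ^ 2 :=
          (my_parseval _).symm
      _ = ∫ ξ : E3, 4 * π ^ 2 * (ξ i) ^ 2 * ((η (‖ξ‖ / N)) ^ 2 * ‖𝓕 (⇑g) ξ‖ ^ 2) := by
          congr 1; funext ξ
          rw [← epd i, my_norm_fourier_pd w i ξ, hwH, hHnorm ξ]
  -- integrability on the frequency side
  have hGcont : Continuous (𝓕 ⇑g) := by rw [← hG]; exact G.continuous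
  have hmcont : Continuous (fun ξ : E3 => η (‖ξ‖ / N)) := hmt.1.continuous
  have hproj : ∀ i : Fin 3, Continuous (fun ξ : E3 => ξ i) := by
    intro i
    exact (EuclideanSpace.proj (𝕜 := ℝ) (ι := Fin 3) i).continuous
  have hIsmall : ∀ i : Fin 3, Integrable
      (fun ξ : E3 => (η (‖ξ‖ / N)) ^ 2 * (ξ i) ^ 2 * ‖𝓕 (⇑g) ξ‖ ^ 2) := by
    intro i
    apply Integrable.mono' (integrable_w2_norm_sq G)
    · exact (((hmcont.pow 2).mul ((hproj i).pow 2)).mul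
        ((hGcont.norm.pow 2))).aestronglyMeasurable
    · filter_upwards with ξ
      rw [Real.norm_eq_abs, _root_.abs_of_nonneg (by positivity), ← hG]
      have h1 : (η (‖ξ‖ / N)) ^ 2 ≤ 1 := by
        have := hmpos ξ; have := hmle ξ; nlinarith
      have h2 := coord_sq_le ξ i
      have h3 : (η (‖ξ‖ / N)) ^ 2 * (ξ i) ^ 2 ≤ ‖ξ‖ ^ 2 := by
        nlinarith [sq_nonneg (ξ i), mul_nonneg (sub_nonneg.mpr h1) (sq_nonneg (ξ i))]
      exact mul_le_mul_of_nonneg_right h3 (sq_nonneg ‖G ξ‖)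
  have hIbig : Integrable
      (fun ξ : E3 => (η (‖ξ‖ / N)) ^ 2 * ‖ξ‖ ^ 2 * ‖𝓕 (⇑g) ξ‖ ^ 2) := by
    apply Integrable.mono' (integrable_w2_norm_sq G)
    · exact (((hmcont.pow 2).mul (continuous_norm.pow 2)).mul
        ((hGcont.norm.pow 2))).aestronglyMeasurable
    · filter_upwards with ξ
      rw [Real.norm_eq_abs, _root_.abs_of_nonneg (by positivity), ← hG]
      have h1 : (η (‖ξ‖ / N)) ^ 2 ≤ 1 := by
        have := hmpos ξ; have := hmle ξ; nlinarith
      have h3 : (η (‖ξ‖ / N)) ^ 2 * ‖ξ‖ ^ 2 ≤ ‖ξ‖ ^ 2 := by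
        nlinarith [sq_nonneg ‖ξ‖, mul_nonneg (sub_nonneg.mpr h1) (sq_nonneg ‖ξ‖)]
      exact mul_le_mul_of_nonneg_right h3 (sq_nonneg ‖G ξ‖)
  have hIf1 : Integrable (fun ξ : E3 => (1 + ‖ξ‖ ^ 2) ^ s * ‖𝓕 (⇑g) ξ‖ ^ 2) := by
    apply Integrable.mono' ((integrable_norm_sq G).add (integrable_w2_norm_sq G))
    · apply Continuous.aestronglyMeasurable
      apply Continuous.mul _ (hGcont.norm.pow 2)
      apply Continuous.rpow_const (continuous_const.add (continuous_norm.pow 2))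
      intro ξ
      left
      exact (by positivity : (0:ℝ) < 1 + ‖ξ‖ ^ 2).ne'
    · filter_upwards with ξ
      rw [Real.norm_eq_abs, _root_.abs_of_nonneg (by positivity), ← hG]
      have h1 : (1 + ‖ξ‖ ^ 2 : ℝ) ^ s ≤ (1 + ‖ξ‖ ^ 2 : ℝ) ^ (1:ℝ) :=
        Real.rpow_le_rpow_of_exponent_le (by nlinarith [sq_nonneg ‖ξ‖]) hs1.le
      rw [Real.rpow_one] at h1
      simp only [Pi.add_apply]
      have h2 := mul_le_mul_of_nonneg_right h1 (sq_nonneg ‖G ξ‖)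
      nlinarith [sq_nonneg ‖G ξ‖, sq_nonneg ‖ξ‖]
  have hIf2 : Integrable (fun ξ : E3 =>
      2 * ‖𝓕 (⇑g) ξ‖ ^ 2 + 8 * ((η (‖ξ‖ / N)) ^ 2 * ‖ξ‖ ^ 2 * ‖𝓕 (⇑g) ξ‖ ^ 2)) := by
    apply Integrable.add
    · have h5 : Integrable (fun ξ : E3 => 2 * ‖𝓕 (⇑g) ξ‖ ^ 2) := by
        rw [← hG]; exact (integrable_norm_sq G).const_mul 2
      exact h5
    · exact hIbig.const_mul 8
  -- main chain
  have step1 : inhomSobSq s (fun x => g x)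
      ≤ ∫ ξ : E3, (2 * ‖𝓕 (⇑g) ξ‖ ^ 2
        + 8 * ((η (‖ξ‖ / N)) ^ 2 * ‖ξ‖ ^ 2 * ‖𝓕 (⇑g) ξ‖ ^ 2)) := by
    apply integral_mono hIf1 hIf2
    intro ξ
    have hp := pointwise_key hs hs1 hη hN (norm_nonneg ξ)
    have h2 := mul_le_mul_of_nonneg_right hp (sq_nonneg ‖𝓕 (⇑g) ξ‖)
    calc (1 + ‖ξ‖ ^ 2) ^ s * ‖𝓕 (⇑g) ξ‖ ^ 2
        ≤ (2 + 8 * (η (‖ξ‖ / N)) ^ 2 * ‖ξ‖ ^ 2) * ‖𝓕 (⇑g) ξ‖ ^ 2 := h2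
      _ = 2 * ‖𝓕 (⇑g) ξ‖ ^ 2 + 8 * ((η (‖ξ‖ / N)) ^ 2 * ‖ξ‖ ^ 2 * ‖𝓕 (⇑g) ξ‖ ^ 2) := by
          ring
  have step2 : ∫ ξ : E3, (2 * ‖𝓕 (⇑g) ξ‖ ^ 2
        + 8 * ((η (‖ξ‖ / N)) ^ 2 * ‖ξ‖ ^ 2 * ‖𝓕 (⇑g) ξ‖ ^ 2))
      = 2 * (∫ ξ : E3, ‖𝓕 (⇑g) ξ‖ ^ 2)
        + 8 * ∫ ξ : E3, (η (‖ξ‖ / N)) ^ 2 * ‖ξ‖ ^ 2 * ‖𝓕 (⇑g) ξ‖ ^ 2 := by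
    have hA : Integrable (fun ξ : E3 => ‖𝓕 (⇑g) ξ‖ ^ 2) := by
      rw [← hG]; exact integrable_norm_sq G
    rw [integral_add (hA.const_mul 2) (hIbig.const_mul 8), integral_const_mul,
      integral_const_mul]
  have step3 : ∫ ξ : E3, (η (‖ξ‖ / N)) ^ 2 * ‖ξ‖ ^ 2 * ‖𝓕 (⇑g) ξ‖ ^ 2
      = ∑ i : Fin 3, ∫ ξ : E3, (η (‖ξ‖ / N)) ^ 2 * (ξ i) ^ 2 * ‖𝓕 (⇑g) ξ‖ ^ 2 := by
    rw [← integral_finset_sum _ (fun i _ => hIsmall i)]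
    congr 1
    funext ξ
    rw [norm_sq_eq_sum ξ, Finset.mul_sum, Finset.sum_mul]
  have step4 : ∀ i : Fin 3, ∫ ξ : E3, (η (‖ξ‖ / N)) ^ 2 * (ξ i) ^ 2 * ‖𝓕 (⇑g) ξ‖ ^ 2
      = (1 / (4 * π ^ 2)) * ∫ x : E3, Complex.normSq (pd (⇑w) i x) := by
    intro i
    rw [key_i i, ← integral_const_mul]
    congr 1
    funext ξ
    have hpi : (π:ℝ) ≠ 0 := pi_ne_zero
    field_simp
  have mass_eq : ∫ ξ : E3, ‖𝓕 (⇑g) ξ‖ ^ 2 = ∫ x : E3, Complex.normSq (g x) := by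
    rw [my_parseval g]
    congr 1
    funext x
    rw [Complex.normSq_eq_norm_sq]
  have mass_nonneg : (0:ℝ) ≤ ∫ x : E3, Complex.normSq (g x) :=
    integral_nonneg fun x => Complex.normSq_nonneg _
  have sum_step4 : ∑ i : Fin 3, ∫ ξ : E3, (η (‖ξ‖ / N)) ^ 2 * (ξ i) ^ 2 * ‖𝓕 (⇑g) ξ‖ ^ 2
      = (1 / (4 * π ^ 2)) * ∑ i : Fin 3, ∫ x : E3, Complex.normSq (pd (⇑w) i x) := by
    rw [Finset.mul_sum]
    exact Finset.sum_congr rfl fun i _ => step4 i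
  have pi_sq : (1:ℝ) ≤ π ^ 2 := by nlinarith [pi_gt_three]
  have final : inhomSobSq s (fun x => g x)
      ≤ 4 * (energyE ⇑w + ∫ x : E3, Complex.normSq (g x)) := by
    have hT : ∫ ξ : E3, (η (‖ξ‖ / N)) ^ 2 * ‖ξ‖ ^ 2 * ‖𝓕 (⇑g) ξ‖ ^ 2
        = (1 / (4 * π ^ 2)) * ∑ i : Fin 3, ∫ x : E3, Complex.normSq (pd (⇑w) i x) := by
      rw [step3, sum_step4]
    have hTle : ∫ ξ : E3, (η (‖ξ‖ / N)) ^ 2 * ‖ξ‖ ^ 2 * ‖𝓕 (⇑g) ξ‖ ^ 2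
        ≤ (1 / (4 * π ^ 2)) * (2 * energyE ⇑w) := by
      rw [hT]
      apply mul_le_mul_of_nonneg_left hEsum (by positivity)
    have h8 : 8 * ((1 / (4 * π ^ 2)) * (2 * energyE ⇑w)) ≤ 4 * energyE ⇑w := by
      rw [show 8 * ((1 / (4 * π ^ 2)) * (2 * energyE ⇑w)) = (4 / π ^ 2) * energyE ⇑w by
        field_simp; ring]
      have : (4 / π ^ 2 : ℝ) ≤ 4 := by
        rw [div_le_iff₀ (by positivity)]
        nlinarith
      nlinarith
    calc inhomSobSq s (fun x => g x)
        ≤ 2 * (∫ ξ : E3, ‖𝓕 (⇑g) ξ‖ ^ 2)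
          + 8 * ∫ ξ : E3, (η (‖ξ‖ / N)) ^ 2 * ‖ξ‖ ^ 2 * ‖𝓕 (⇑g) ξ‖ ^ 2 := by
          rw [← step2]; exact step1
      _ ≤ 2 * (∫ x : E3, Complex.normSq (g x)) + 4 * energyE ⇑w := by
          rw [mass_eq]
          have := mul_le_mul_of_nonneg_left hTle (by norm_num : (0:ℝ) ≤ 8)
          linarith [this, h8]
      _ ≤ 4 * (energyE ⇑w + ∫ x : E3, Complex.normSq (g x)) := by linarith
  rw [hIop]
  exact final
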